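/- For a coisotropic index set P, the following are equivalent: (i) every regular epimorphism M → P splits; (ii) for every regular epimorphism Φ : M → N and every morphism Ψ : P → N there exists χ : P → M with Φ ∘ χ = Ψ; (iii) the map ι_P : P_W → P_T is injective. -/

import Mathlib

/-! Coisotropic index sets and their morphisms. -/

universe u

structure CoisoSet : Type (u + 1) where
  T : Type u
  W : Type u
  N : Set W
  str : W → T

structure CoisoSetHom (M P : CoisoSet.{u}) : Type u where
  T : M.T → P.T
  W : M.W → P.W
  comm : ∀ x : M.W, T (M.str x) = P.str (W x)
  null : ∀ x ∈ M.N, W x ∈ P.N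

def CoisoSetHom.id (M : CoisoSet) : CoisoSetHom M M :=
  ⟨fun x => x, fun x => x, fun _ => rfl, fun _ h => h⟩

def CoisoSetHom.comp {M P Q : CoisoSet} (g : CoisoSetHom P Q)
    (f : CoisoSetHom M P) : CoisoSetHom M Q :=
  ⟨g.T ∘ f.T, g.W ∘ f.W,
    fun x => by simp only [Function.comp_apply, f.comm, g.comm],
    fun x hx => g.null _ (f.null _ hx)⟩

/-- Regular epimorphisms of coisotropic index sets: both components
surjective and the null set mapped onto the null set. -/
def IsRegEpi {M P : CoisoSet} (f : CoisoSetHom M P) : Prop :=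
  Function.Surjective f.T ∧ Function.Surjective f.W ∧ f.W '' M.N = P.N


theorem CoisoSetHom.ext' {M P : CoisoSet} {f g : CoisoSetHom M P}
    (hT : f.T = g.T) (hW : f.W = g.W) : f = g := by
  cases f; cases g; simp_all

/-- for a coisotropic index set `P` the following are
equivalent: (i) every regular epimorphism onto `P` splits; (ii) `P` has
the lifting property against all regular epimorphisms; (iii) `ι_P` is
injective. -/
theorem coisoSet_projective_tfae (P : CoisoSet) :
    List.TFAE
      [∀ (M : CoisoSet) (Φ : CoisoSetHom M P), IsRegEpi Φ →
          ∃ Ψ : CoisoSetHom P M, Φ.comp Ψ = CoisoSetHom.id P,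
        ∀ (M N : CoisoSet) (Φ : CoisoSetHom M N), IsRegEpi Φ →
          ∀ Ψ : CoisoSetHom P N, ∃ χ : CoisoSetHom P M, Φ.comp χ = Ψ,
        Function.Injective P.str] := by
  tfae_have 2 → 1
  · intro h M Φ hΦ
    exact h M P Φ hΦ (CoisoSetHom.id P)
  tfae_have 1 → 3
  · intro h w w' hww
    set M : CoisoSet := ⟨Sum P.W P.T, P.W, P.N, Sum.inl⟩ with hM
    set Φ : CoisoSetHom M P := ⟨Sum.elim P.str _root_.id, _root_.id, fun _ => rfl, fun _ h => h⟩ with hΦ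
    obtain ⟨Ψ, hΨ⟩ := h M Φ ⟨fun t => ⟨Sum.inr t, rfl⟩, Function.surjective_id, by exact Set.image_id P.N⟩
    have hWeq : ∀ x, Ψ.W x = x := fun x => congrFun (congrArg CoisoSetHom.W hΨ) x
    have h1 : Sum.inl (α := P.W) (β := P.T) w = Sum.inl w' := by
      have c1 := Ψ.comm w
      have c2 := Ψ.comm w'
      rw [hWeq] at c1 c2
      calc Sum.inl w = Ψ.T (P.str w) := c1.symm
        _ = Ψ.T (P.str w') := by rw [hww]
        _ = Sum.inl w' := c2
    exact Sum.inl.inj h1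
  tfae_have 3 → 2
  · intro hinj M N Φ hΦ Ψ
    obtain ⟨hT, hW, hN⟩ := hΦ
    have hw : ∀ w : P.W, ∃ m : M.W, Φ.W m = Ψ.W w ∧ (w ∈ P.N → m ∈ M.N) := by
      intro w
      by_cases hwN : w ∈ P.N
      · have hmem : Ψ.W w ∈ N.N := Ψ.null w hwN
        rw [← hN] at hmem
        obtain ⟨m, hm, hm2⟩ := hmem
        exact ⟨m, hm2, fun _ => hm⟩
      · obtain ⟨m, hm⟩ := hW (Ψ.W w)
        exact ⟨m, hm, fun h => absurd h hwN⟩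
    choose χW hχW hχN using hw
    have ht : ∀ t : P.T, ∃ m : M.T, Φ.T m = Ψ.T t ∧ ∀ w, P.str w = t → m = M.str (χW w) := by
      intro t
      by_cases h : ∃ w, P.str w = t
      · obtain ⟨w, hwt⟩ := h
        refine ⟨M.str (χW w), ?_, ?_⟩
        · rw [Φ.comm, hχW, ← Ψ.comm, hwt]
        · intro w' hw'
          have : w' = w := hinj (by rw [hwt, hw'])
          rw [this]
      · obtain ⟨m, hm⟩ := hT (Ψ.T t)
        exact ⟨m, hm, fun w hwt => absurd ⟨w, hwt⟩ h⟩
    choose χT hχT hχTs using ht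
    refine ⟨⟨χT, χW, fun w => hχTs (P.str w) w rfl, fun w hwn => hχN w hwn⟩, ?_⟩
    exact CoisoSetHom.ext' (funext fun t => hχT t) (funext fun w => hχW w)
  tfae_finish
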